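/- Let k \ge 3 and let n be a multiple of 4\lfloor(k-1)/2\rfloor. There exists an n-vertex \widehat{P}_k-free graph with at least \lfloor(k-1)/2\rfloor \cdot n^2/8 triangles. Concretely, take the complete bipartite graph with parts A, B of size n/2 and add edges inside A so that A induces a disjoint union of copies of K_{s,s} with s = \lfloor(k-1)/2\rfloor; this graph is \widehat{P}_k-free and has exactly \lfloor(k-1)/2\rfloor n^2/8 triangles. -/

import Mathlib

open SimpleGraph

/-- `G` contains a copy of `H` (a subgraph isomorphic to `H`). -/
def containsCopy {W V : Type*} (H : SimpleGraph W) (G : SimpleGraph V) : Prop :=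
  ∃ f : H →g G, Function.Injective f

/-- The number of triangles of `G`. -/
noncomputable def triCount {V : Type*} (G : SimpleGraph V) : ℕ :=
  {s : Finset V | G.IsNClique 3 s}.ncard

/-- The number of edges of `G`. -/
noncomputable def edgeCount {V : Type*} (G : SimpleGraph V) : ℕ :=
  G.edgeSet.ncard

/-- The suspension `K_1 ∨ H` of a graph `H`: a new vertex (`none`) joined to all
vertices of `H`. -/
def susp {W : Type*} (H : SimpleGraph W) : SimpleGraph (Option W) where
  Adj a b :=
    match a, b with
    | some x, some y => H.Adj x y
    | some _, none => True
    | none, some _ => True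
    | none, none => False
  symm := ⟨by
    rintro (_ | x) (_ | y) h
    · exact h
    · trivial
    · trivial
    · exact SimpleGraph.Adj.symm h⟩
  loopless := ⟨by
    rintro (_ | x) h
    · exact h
    · exact H.irrefl h⟩

/-- The Turán number: maximum number of edges of an `H`-free graph on `n` vertices. -/
noncomputable def exNum (n : ℕ) {W : Type*} (H : SimpleGraph W) : ℕ :=
  sSup {m | ∃ G : SimpleGraph (Fin n), ¬ containsCopy H G ∧ edgeCount G = m}

/-- The codegree of the pair `a, b`: number of common neighbours. -/
noncomputable def codeg {V : Type*} (G : SimpleGraph V) (a b : V) : ℕ :=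
  (G.neighborSet a ∩ G.neighborSet b).ncard

section Aux

/-- The extremal construction: parts `A = Fin t × Bool × Fin s` (disjoint copies of
`K_{s,s}`) and `B = Fin m`, with all `A`-`B` edges present. -/
def myG (s t m : ℕ) : SimpleGraph ((Fin t × Bool × Fin s) ⊕ Fin m) where
  Adj a b := match a, b with
    | .inl (b1, s1, _), .inl (b2, s2, _) => b1 = b2 ∧ s1 ≠ s2
    | .inl _, .inr _ => True
    | .inr _, .inl _ => True
    | .inr _, .inr _ => False
  symm := ⟨by
    rintro (⟨b1, s1, p1⟩ | x) (⟨b2, s2, p2⟩ | y) h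
    · exact ⟨h.1.symm, Ne.symm h.2⟩
    · trivial
    · trivial
    · exact h⟩
  loopless := ⟨by
    rintro (⟨b, sd, p⟩ | x) h
    · exact h.2 rfl
    · exact h⟩

variable {s t m : ℕ}

@[simp] lemma myG_adj_inl_inl (b1 b2 : Fin t) (s1 s2 : Bool) (p1 p2 : Fin s) :
    (myG s t m).Adj (.inl (b1, s1, p1)) (.inl (b2, s2, p2)) ↔ b1 = b2 ∧ s1 ≠ s2 :=
  Iff.rfl

@[simp] lemma myG_adj_inl_inr (a : Fin t × Bool × Fin s) (y : Fin m) :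
    (myG s t m).Adj (.inl a) (.inr y) := trivial

@[simp] lemma myG_adj_inr_inl (y : Fin m) (a : Fin t × Bool × Fin s) :
    (myG s t m).Adj (.inr y) (.inl a) := trivial

@[simp] lemma myG_adj_inr_inr (y z : Fin m) :
    ¬ (myG s t m).Adj (.inr y) (.inr z) := fun h => h

lemma myG_free (s t m k : ℕ) (hs : 2 * s + 1 ≤ k) (hsval : s = (k - 1) / 2) :
    ¬ containsCopy (susp (pathGraph (k + 1))) (myG s t m) := by
  rintro ⟨f, hf⟩
  set g : Fin (k + 1) → (Fin t × Bool × Fin s) ⊕ Fin m := fun i => f (some i) with hg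
  have hg_inj : Function.Injective g := fun i j h => by
    have := hf h; simpa using this
  have hg_adj : ∀ i : ℕ, (h : i < k) →
      (myG s t m).Adj (g ⟨i, by omega⟩) (g ⟨i + 1, by omega⟩) := by
    intro i h
    apply f.map_adj
    show (pathGraph (k + 1)).Adj _ _
    rw [pathGraph_adj]
    left; rfl
  have hg_v : ∀ i, (myG s t m).Adj (f none) (g i) := by
    intro i
    apply f.map_adj
    show True
    trivial
  rcases hE : f none with ⟨b0, sd0, p0⟩ | y
  · -- center in A
    -- alternation of sides
    have hleft : ∀ i : Fin (k + 1), (g i).isLeft = true →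
        ∃ q, g i = Sum.inl (b0, !sd0, q) := by
      intro i hi
      rcases hgi : g i with ⟨b, sd, p⟩ | z
      · have hv := hg_v i
        rw [hE, hgi] at hv
        obtain ⟨h1, h2⟩ := hv
        have hsd : sd = !sd0 := by revert h2; cases sd0 <;> cases sd <;> decide
        refine ⟨p, ?_⟩
        subst hsd h1
        rfl
      · rw [hgi] at hi; simp at hi
    have halt : ∀ (i j : Fin (k + 1)), (j : ℕ) = (i : ℕ) + 1 →
        (g j).isLeft = !(g i).isLeft := by
      intro i j hij
      have hik : (i : ℕ) < k := by omega
      have hadj := hg_adj i hik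
      have e1 : (⟨(i : ℕ), by omega⟩ : Fin (k + 1)) = i := Fin.ext rfl
      have e2 : (⟨(i : ℕ) + 1, by omega⟩ : Fin (k + 1)) = j := Fin.ext hij.symm
      rw [e1, e2] at hadj
      rcases h1 : g i with ⟨ba, sda, pa⟩ | z <;> rcases h2 : g j with ⟨ba', sda', pa'⟩ | z'
      · exfalso
        obtain ⟨q, hq⟩ := hleft i (by rw [h1]; rfl)
        obtain ⟨q', hq'⟩ := hleft j (by rw [h2]; rfl)
        rw [h1] at hq; rw [h2] at hq'
        simp only [Sum.inl.injEq, Prod.mk.injEq] at hq hq'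
        rw [h1, h2] at hadj
        have hadj' := (myG_adj_inl_inl _ _ _ _ _ _).mp hadj
        exact hadj'.2 (hq.2.1.trans hq'.2.1.symm)
      · simp
      · simp
      · rw [h1, h2] at hadj
        exact absurd hadj (myG_adj_inr_inr _ _)
    have key : ∀ a : ℕ, (ha : a + 2 * s ≤ k) → (g ⟨a, by omega⟩).isLeft = true → False := by
      intro a ha hla
      have hpos : ∀ j : ℕ, (hj : j ≤ s) → (g ⟨a + 2 * j, by omega⟩).isLeft = true := by
        intro j
        induction j with
        | zero =>
          intro _
          have e0 : (⟨a + 2 * 0, by omega⟩ : Fin (k + 1)) = ⟨a, by omega⟩ :=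
            Fin.ext (by simp)
          rw [e0]; exact hla
        | succ j ih =>
          intro hj
          have e1 := halt ⟨a + 2 * j, by omega⟩ ⟨a + 2 * j + 1, by omega⟩ rfl
          have e2 := halt ⟨a + 2 * j + 1, by omega⟩ ⟨a + 2 * (j + 1), by omega⟩ rfl
          rw [e1, ih (by omega)] at e2
          simpa using e2
      have hq : ∀ j : Fin (s + 1), ∃ q,
          g ⟨a + 2 * (j : ℕ), by have := j.isLt; omega⟩ = Sum.inl (b0, !sd0, q) := by
        intro j
        exact hleft _ (hpos (j : ℕ) (by have := j.isLt; omega))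
      choose q hq using hq
      have hqinj : Function.Injective q := by
        intro i j hij
        have h1 := (hq i).trans (hij ▸ (hq j).symm)
        have h2 := hg_inj h1
        have h3 : a + 2 * (i : ℕ) = a + 2 * (j : ℕ) := congrArg Fin.val h2
        exact Fin.ext (by omega)
      have hcard := Fintype.card_le_of_injective q hqinj
      simp only [Fintype.card_fin] at hcard
      omega
    rcases h0 : (g ⟨0, by omega⟩).isLeft with _ | _
    · have h1 := halt ⟨0, by omega⟩ ⟨1, by omega⟩ rfl
      rw [h0] at h1
      exact key 1 (by omega) (by simpa using h1)
    · exact key 0 (by omega) h0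
  · -- center in B
    have hA : ∀ i : Fin (k + 1), ∃ b sd p, g i = Sum.inl (b, sd, p) := by
      intro i
      have hv := hg_v i
      rw [hE] at hv
      rcases hgi : g i with ⟨b, sd, p⟩ | z
      · exact ⟨b, sd, p, rfl⟩
      · rw [hgi] at hv; exact absurd hv (by simp)
    choose b sd p hb using hA
    have hblk : ∀ i : ℕ, (h : i < k + 1) → b ⟨i, h⟩ = b ⟨0, by omega⟩ := by
      intro i
      induction i with
      | zero => intro h; rfl
      | succ i ih =>
        intro h
        have hik : i < k := by omega
        have hadj := hg_adj i hik
        rw [hb ⟨i, by omega⟩, hb ⟨i + 1, by omega⟩] at hadj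
        have : b ⟨i, by omega⟩ = b ⟨i + 1, by omega⟩ := hadj.1
        rw [← this, ih (by omega)]
    have hinj : Function.Injective (fun i : Fin (k + 1) => (sd i, p i)) := by
      intro i j hij
      simp only [Prod.mk.injEq] at hij
      apply hg_inj
      have hbi : b i = b j := by
        have h1 := hblk (i : ℕ) i.isLt
        have h2 := hblk (j : ℕ) j.isLt
        rw [Fin.eta] at h1 h2
        rw [h1, h2]
      rw [hb i, hb j, hbi, hij.1, hij.2]
    have hcard := Fintype.card_le_of_injective _ hinj
    simp at hcard
    omega

end Aux

/-- For `k ≥ 3` and `n` a multiple of `4⌊(k-1)/2⌋`, there is an `n`-vertex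
`\widehat{P}_k`-free graph with at least `⌊(k-1)/2⌋·n²/8` triangles. -/
theorem suspension_path_lower (k n : ℕ) (hk : 3 ≤ k)
    (hdvd : 4 * ((k - 1) / 2) ∣ n) :
    ∃ G : SimpleGraph (Fin n),
      ¬ containsCopy (susp (pathGraph (k + 1))) G ∧
      ((k - 1) / 2) * n ^ 2 ≤ 8 * triCount G := by
  set s := (k - 1) / 2 with hsdef
  have hsk : 2 * s + 1 ≤ k := by omega
  obtain ⟨t, ht⟩ := hdvd
  have ht' : n = 4 * s * t := by omega
  have hcard : Fintype.card ((Fin t × Bool × Fin s) ⊕ Fin (2 * s * t)) = n := by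
    simp [ht']
    ring
  let e : ((Fin t × Bool × Fin s) ⊕ Fin (2 * s * t)) ≃ Fin n :=
    Fintype.equivFinOfCardEq hcard
  refine ⟨SimpleGraph.comap (⇑e.symm) (myG s t (2 * s * t)), ?_, ?_⟩
  · rintro ⟨f, hf⟩
    refine myG_free s t (2 * s * t) k hsk hsdef ⟨?_, ?_⟩
    · exact (⟨⇑e.symm, fun h => h⟩ :
        (SimpleGraph.comap (⇑e.symm) (myG s t (2 * s * t))) →g myG s t (2 * s * t)).comp f
    · exact e.symm.injective.comp hf
  · set GG := SimpleGraph.comap (⇑e.symm) (myG s t (2 * s * t)) with hGG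
    have hadj : ∀ x y, (myG s t (2 * s * t)).Adj x y → GG.Adj (e x) (e y) := by
      intro x y h
      show (myG s t (2 * s * t)).Adj (e.symm (e x)) (e.symm (e y))
      simpa using h
    set T : Fin t × Fin s × Fin s × Fin (2 * s * t) → Finset (Fin n) :=
      fun x => {e (.inl (x.1, false, x.2.1)), e (.inl (x.1, true, x.2.2.1)),
        e (.inr x.2.2.2)} with hT
    have hTcl : ∀ x, GG.IsNClique 3 (T x) := by
      rintro ⟨bl, q1, q2, y⟩
      rw [hT]
      rw [SimpleGraph.is3Clique_triple_iff]
      refine ⟨hadj _ _ ?_, hadj _ _ ?_, hadj _ _ ?_⟩ <;> simp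
    have hTinj : Function.Injective T := by
      rintro ⟨bl, q1, q2, y⟩ ⟨bl', q1', q2', y'⟩ h
      rw [hT] at h
      simp only at h
      have m1 : e (Sum.inl (bl, false, q1)) ∈
          ({e (.inl (bl', false, q1')), e (.inl (bl', true, q2')), e (.inr y')} :
            Finset (Fin n)) := by rw [← h]; simp
      have m2 : e (Sum.inl (bl, true, q2)) ∈
          ({e (.inl (bl', false, q1')), e (.inl (bl', true, q2')), e (.inr y')} :
            Finset (Fin n)) := by rw [← h]; simp
      have m3 : e (Sum.inr y) ∈
          ({e (.inl (bl', false, q1')), e (.inl (bl', true, q2')), e (.inr y')} :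
            Finset (Fin n)) := by rw [← h]; simp
      simp only [Finset.mem_insert, Finset.mem_singleton,
        Equiv.apply_eq_iff_eq, Sum.inl.injEq, Sum.inr.injEq, Prod.mk.injEq] at m1 m2 m3
      simp_all
    have hsub : Set.range T ⊆ {u : Finset (Fin n) | GG.IsNClique 3 u} := by
      rintro _ ⟨x, rfl⟩
      exact hTcl x
    have h1 : t * (s * (s * (2 * s * t))) ≤ triCount GG := by
      have hr : (Set.range T).ncard = t * (s * (s * (2 * s * t))) := by
        rw [← Nat.card_coe_set_eq, Nat.card_range_of_injective hTinj]
        simp [Nat.card_eq_fintype_card]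
      rw [triCount, ← hr]
      exact Set.ncard_le_ncard hsub (Set.toFinite _)
    have h2 : s * n ^ 2 = 8 * (t * (s * (s * (2 * s * t)))) := by
      rw [ht']; ring
    rw [h2]
    exact Nat.mul_le_mul_left 8 h1
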